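/- arXiv:1703.00616 — 4 statements merged into one kernel-verified Lean document; each statement's English description precedes it below -/
import Mathlib

section
/- Let (x_i, y_i) and (x_i', y_i') be two sequences in X̂ × Y. If d_Y(y_i, y_i') → ∞ as i → ∞, then d_Γ((x_i, y_i), (x_i', y_i')) → ∞ as i → ∞. -/
open Filter Topology

/-- Lemma `boundedy` of the paper.
Let `Γ` act by homeomorphisms on a topological space `X̂` and by isometries
on a metric space `Y`.  Assume the diagonal action on `X̂ × Y` is cocompact,
and let `dΓ` be a `Γ`-invariant proper metric on `X̂ × Y` inducing the product
topology.  If `dist (yᵢ) (yᵢ') → ∞` then `dΓ (xᵢ, yᵢ) (xᵢ', yᵢ') → ∞`. -/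
theorem stmt0
    {Γ : Type*} [Group Γ]
    {Xh : Type*} [TopologicalSpace Xh] [MulAction Γ Xh]
    (hcont : ∀ γ : Γ, Continuous (fun x : Xh => γ • x))
    {Y : Type*} [MetricSpace Y] [MulAction Γ Y]
    (hisomY : ∀ (γ : Γ) (y y' : Y), dist (γ • y) (γ • y') = dist y y')
    -- the diagonal action of `Γ` on `X̂ × Y` is cocompact
    (hcocompact : ∃ K : Set (Xh × Y), IsCompact K ∧ ∀ p : Xh × Y, ∃ γ : Γ, γ • p ∈ K)
    -- `dΓ` is a metric on `X̂ × Y` …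
    (dΓ : (Xh × Y) → (Xh × Y) → ℝ)
    (hsymm : ∀ p q, dΓ p q = dΓ q p)
    (htri : ∀ p q r, dΓ p r ≤ dΓ p q + dΓ q r)
    (heq : ∀ p q, dΓ p q = 0 ↔ p = q)
    -- … which is `Γ`-invariant …
    (hinv : ∀ (γ : Γ) (p q : Xh × Y), dΓ (γ • p) (γ • q) = dΓ p q)
    -- … proper (closed balls are compact) …
    (hproper : ∀ (p : Xh × Y) (r : ℝ), IsCompact {q | dΓ p q ≤ r})
    -- … and induces the product topology on `X̂ × Y`
    (htopo : ∀ (p : Xh × Y) (s : Set (Xh × Y)),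
      s ∈ 𝓝 p ↔ ∃ ε > 0, {q | dΓ p q < ε} ⊆ s)
    (x x' : ℕ → Xh) (y y' : ℕ → Y)
    (hY : Tendsto (fun i => dist (y i) (y' i)) atTop atTop) :
    Tendsto (fun i => dΓ (x i, y i) (x' i, y' i)) atTop atTop := by
  obtain ⟨K, hK, hKcov⟩ := hcocompact
  obtain ⟨γ0, hγ0⟩ := hKcov (x 0, y 0)
  have hKne : K.Nonempty := ⟨_, hγ0⟩
  have hnonneg : ∀ p q, 0 ≤ dΓ p q := by
    intro p q
    have h1 := htri p q p
    have h2 := (heq p p).2 rfl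
    have h3 := hsymm p q
    linarith
  have hcont1 : ∀ p0 : Xh × Y, Continuous (fun q => dΓ p0 q) := by
    intro p0
    rw [continuous_iff_continuousAt]
    intro q
    rw [ContinuousAt, Metric.tendsto_nhds]
    intro ε hε
    have hmem : {q' | dΓ q q' < ε} ∈ 𝓝 q := (htopo q _).2 ⟨ε, hε, subset_rfl⟩
    filter_upwards [hmem] with q' hq'
    have h1 := htri p0 q q'
    have h2 := htri p0 q' q
    have h3 := hsymm q q'
    rw [Real.dist_eq, abs_lt]
    constructor <;> linarith
  set p0 : Xh × Y := γ0 • (x 0, y 0) with hp0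
  obtain ⟨pD, hpD, hD⟩ := hK.exists_isMaxOn hKne ((hcont1 p0).continuousOn)
  set D := dΓ p0 pD with hDdef
  have hD0 : 0 ≤ D := hnonneg _ _
  have key : ∀ R : ℝ, ∃ C : ℝ, ∀ p q : Xh × Y, dΓ p q ≤ R → dist p.2 q.2 ≤ C := by
    intro R
    by_cases hR : 0 ≤ R
    · have hcomp := hproper p0 (D + R)
      have hcontf : Continuous (fun q : Xh × Y => dist q.2 p0.2) :=
        continuous_snd.dist continuous_const
      have hne : ({q | dΓ p0 q ≤ D + R} : Set (Xh × Y)).Nonempty := by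
        refine ⟨p0, ?_⟩
        have := (heq p0 p0).2 rfl
        simp only [Set.mem_setOf_eq, this]
        linarith
      obtain ⟨qM, hqM, hM⟩ := hcomp.exists_isMaxOn hne hcontf.continuousOn
      set M := dist qM.2 p0.2 with hMdef
      refine ⟨2 * M, fun p q hpq => ?_⟩
      obtain ⟨γ, hγ⟩ := hKcov p
      have h1 : dΓ p0 (γ • p) ≤ D := hD hγ
      have h2 : dΓ p0 (γ • q) ≤ D + R := by
        have := htri p0 (γ • p) (γ • q)
        rw [hinv γ p q] at this
        linarith
      have hb1 : (γ • p) ∈ {q | dΓ p0 q ≤ D + R} := by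
        simp only [Set.mem_setOf_eq]; linarith
      have hb2 : (γ • q) ∈ {q | dΓ p0 q ≤ D + R} := by simp only [Set.mem_setOf_eq]; exact h2
      have hM1 : dist (γ • p).2 p0.2 ≤ M := hM hb1
      have hM2 : dist (γ • q).2 p0.2 ≤ M := hM hb2
      have hdist : dist p.2 q.2 = dist (γ • p).2 (γ • q).2 := by
        simp only [Prod.smul_snd]
        rw [hisomY γ p.2 q.2]
      rw [hdist]
      calc dist (γ • p).2 (γ • q).2 ≤ dist (γ • p).2 p0.2 + dist p0.2 (γ • q).2 :=
            dist_triangle _ _ _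
        _ ≤ M + M := by rw [dist_comm p0.2]; linarith
        _ = 2 * M := by ring
    · exact ⟨0, fun p q hpq => absurd (le_trans (hnonneg p q) hpq) hR⟩
  rw [tendsto_atTop]
  intro b
  obtain ⟨C, hC⟩ := key b
  filter_upwards [hY.eventually (eventually_ge_atTop (C + 1))] with i hi
  by_contra h
  push_neg at h
  have := hC (x i, y i) (x' i, y' i) h.le
  simp only at this
  linarith
end

section
/- Fix basepoints x₀ ∈ X and y₀ ∈ Y. Let (x_i, y_i) and (x_i', y_i') be sequences in X × Y such that all y_i and y_i' remain within uniformly bounded d_Y-distance of y₀, and all x_i and x_i' remain within uniformly bounded d_X-distance of the orbit Stab_Γ(y₀)·x₀. If d_X(x_i, x_i') → ∞ as i → ∞, then d_Γ((x_i, y_i), (x_i', y_i')) → ∞ as i → ∞. -/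
open Filter Topology

/-- Lemma `boundedx` of the paper.
`Γ` acts by homeomorphisms on `X̂` and by isometries on a proper metric space `Y`;
`X ⊆ X̂` is a `Γ`-invariant subspace with a proper `Γ`-invariant metric `dX`
inducing the subspace topology.  The diagonal action on `X̂ × Y` is properly
discontinuous and `dΓ` is a `Γ`-invariant proper metric on `X̂ × Y` inducing the
product topology.  If the `yᵢ, yᵢ'` stay at bounded distance from `y₀`, the
`xᵢ, xᵢ'` stay at bounded `dX`-distance from the `Stab_Γ(y₀)`-orbit of `x₀`, and
`dX xᵢ xᵢ' → ∞`, then `dΓ (xᵢ, yᵢ) (xᵢ', yᵢ') → ∞`. -/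
theorem stmt1
    {Γ : Type*} [Group Γ]
    {Xh : Type*} [TopologicalSpace Xh] [MulAction Γ Xh]
    (hcont : ∀ γ : Γ, Continuous (fun x : Xh => γ • x))
    {Y : Type*} [MetricSpace Y] [ProperSpace Y] [MulAction Γ Y]
    (hisomY : ∀ (γ : Γ) (y y' : Y), dist (γ • y) (γ • y') = dist y y')
    -- `X` is a `Γ`-invariant subspace of `X̂`
    (X : Set Xh)
    (hXinv : ∀ (γ : Γ), ∀ x ∈ X, γ • x ∈ X)
    -- `dX` is a `Γ`-invariant metric on `X` …
    (dX : Xh → Xh → ℝ)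
    (hdXsymm : ∀ p ∈ X, ∀ q ∈ X, dX p q = dX q p)
    (hdXtri : ∀ p ∈ X, ∀ q ∈ X, ∀ r ∈ X, dX p r ≤ dX p q + dX q r)
    (hdXeq : ∀ p ∈ X, ∀ q ∈ X, (dX p q = 0 ↔ p = q))
    (hdXinv : ∀ (γ : Γ), ∀ p ∈ X, ∀ q ∈ X, dX (γ • p) (γ • q) = dX p q)
    -- … which is proper …
    (hdXproper : ∀ p ∈ X, ∀ r : ℝ, IsCompact {q ∈ X | dX p q ≤ r})
    -- … and induces the subspace topology on `X`
    (hdXtopo : ∀ p ∈ X, ∀ s : Set Xh, s ∈ 𝓝[X] p ↔ ∃ ε > 0, {q ∈ X | dX p q < ε} ⊆ s)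
    -- the diagonal action of `Γ` on `X̂ × Y` is properly discontinuous
    (hpd : ∀ K : Set (Xh × Y), IsCompact K → {γ : Γ | ∃ p ∈ K, γ • p ∈ K}.Finite)
    -- `dΓ` is a metric on `X̂ × Y` …
    (dΓ : (Xh × Y) → (Xh × Y) → ℝ)
    (hsymm : ∀ p q, dΓ p q = dΓ q p)
    (htri : ∀ p q r, dΓ p r ≤ dΓ p q + dΓ q r)
    (heq : ∀ p q, dΓ p q = 0 ↔ p = q)
    -- … which is `Γ`-invariant, proper, and induces the product topology
    (hinv : ∀ (γ : Γ) (p q : Xh × Y), dΓ (γ • p) (γ • q) = dΓ p q)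
    (hproper : ∀ (p : Xh × Y) (r : ℝ), IsCompact {q | dΓ p q ≤ r})
    (htopo : ∀ (p : Xh × Y) (s : Set (Xh × Y)),
      s ∈ 𝓝 p ↔ ∃ ε > 0, {q | dΓ p q < ε} ⊆ s)
    -- basepoints and the sequences
    (x₀ : Xh) (hx₀ : x₀ ∈ X) (y₀ : Y)
    (x x' : ℕ → Xh) (y y' : ℕ → Y)
    (hxX : ∀ i, x i ∈ X) (hx'X : ∀ i, x' i ∈ X)
    -- the `yᵢ`, `yᵢ'` stay within uniformly bounded distance of `y₀`
    (hybdd : ∃ C : ℝ, ∀ i, dist (y i) y₀ ≤ C ∧ dist (y' i) y₀ ≤ C)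
    -- the `xᵢ`, `xᵢ'` stay within uniformly bounded `dX`-distance of `Stab_Γ(y₀) • x₀`
    (hxorb : ∃ D : ℝ, ∀ i,
      (∃ γ : Γ, γ • y₀ = y₀ ∧ dX (x i) (γ • x₀) ≤ D) ∧
      (∃ γ : Γ, γ • y₀ = y₀ ∧ dX (x' i) (γ • x₀) ≤ D))
    (hdiv : Tendsto (fun i => dX (x i) (x' i)) atTop atTop) :
    Tendsto (fun i => dΓ (x i, y i) (x' i, y' i)) atTop atTop := by
  -- basic facts about dX
  have hdX0 : ∀ p ∈ X, dX p p = 0 := fun p hp => (hdXeq p hp p hp).2 rfl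
  have hdXnn : ∀ p ∈ X, ∀ q ∈ X, 0 ≤ dX p q := by
    intro p hp q hq
    have h1 := hdXtri p hp q hq p hp
    rw [hdX0 p hp, hdXsymm q hq p hp] at h1
    linarith
  -- continuity of dΓ in the second variable
  have hdΓcont : ∀ p₀ : Xh × Y, Continuous (fun q => dΓ p₀ q) := by
    intro p₀
    rw [continuous_iff_continuousAt]
    intro q
    rw [ContinuousAt, Metric.tendsto_nhds]
    intro ε hε
    have hmem : {r | dΓ q r < ε} ∈ 𝓝 q := (htopo q _).2 ⟨ε, hε, subset_rfl⟩
    filter_upwards [hmem] with r hr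
    rw [Real.dist_eq, abs_sub_lt_iff]
    constructor
    · have := htri p₀ q r
      linarith
    · have := htri p₀ r q
      rw [hsymm r q] at this
      linarith
  by_contra hcon
  rw [Filter.tendsto_atTop] at hcon
  push_neg at hcon
  obtain ⟨R, hR⟩ := hcon
  obtain ⟨C, hC⟩ := hybdd
  obtain ⟨D, hD⟩ := hxorb
  choose g hg hgD using fun i => (hD i).1
  choose g' hg' hg'D using fun i => (hD i).2
  have hD0 : 0 ≤ D := le_trans (hdXnn _ (hxX 0) _ (hXinv _ _ hx₀)) (hgD 0)
  have hC0 : 0 ≤ C := le_trans dist_nonneg (hC 0).1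
  -- the compact set K₀
  set K₀ : Set (Xh × Y) := {q ∈ X | dX x₀ q ≤ D} ×ˢ Metric.closedBall y₀ C with hK₀def
  have hK₀c : IsCompact K₀ := (hdXproper x₀ hx₀ D).prod (isCompact_closedBall y₀ C)
  have hK₀ne : ((x₀, y₀) : Xh × Y) ∈ K₀ := by
    refine ⟨⟨hx₀, ?_⟩, by simp [hC0]⟩
    rw [hdX0 x₀ hx₀]; exact hD0
  set p₀ : Xh × Y := (x₀, y₀) with hp₀def
  obtain ⟨z, hzK, hzmax'⟩ := hK₀c.exists_isMaxOn ⟨p₀, hK₀ne⟩ ((hdΓcont p₀).continuousOn)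
  have hzmax : ∀ q ∈ K₀, dΓ p₀ q ≤ dΓ p₀ z := fun q hq => hzmax' hq
  set M : ℝ := dΓ p₀ z with hMdef
  set R' : ℝ := max R 0 with hR'def
  set K : Set (Xh × Y) := {q | dΓ p₀ q ≤ M + R'} with hKdef
  have hKc : IsCompact K := hproper p₀ (M + R')
  have hK₀K : K₀ ⊆ K := by
    intro q hq
    have := hzmax q hq
    have : dΓ p₀ q ≤ M := this
    have h0 : (0:ℝ) ≤ R' := le_max_right R 0
    simp only [hKdef, Set.mem_setOf_eq]
    linarith
  have hF : {γ : Γ | ∃ p ∈ K, γ • p ∈ K}.Finite := hpd K hKc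
  obtain ⟨B₀, hB₀⟩ := (hF.image (fun γ => dX x₀ (γ • x₀))).bddAbove
  -- key: each gᵢ⁻¹ • (xᵢ, yᵢ) lies in K₀
  have hmemK₀ : ∀ (γ : Γ) (a : Xh) (b : Y), γ • y₀ = y₀ → a ∈ X → dX a (γ • x₀) ≤ D →
      dist b y₀ ≤ C → γ⁻¹ • ((a, b) : Xh × Y) ∈ K₀ := by
    intro γ a b hγy haX haD hbC
    rw [Prod.smul_mk]
    refine ⟨⟨hXinv _ _ haX, ?_⟩, ?_⟩
    · have e1 : dX (γ⁻¹ • a) (γ⁻¹ • (γ • x₀)) = dX a (γ • x₀) :=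
        hdXinv γ⁻¹ a haX (γ • x₀) (hXinv _ _ hx₀)
      rw [inv_smul_smul] at e1
      rw [hdXsymm x₀ hx₀ (γ⁻¹ • a) (hXinv _ _ haX)]
      rw [← e1] at haD
      exact haD
    · have hy : γ⁻¹ • y₀ = y₀ := by
        conv_lhs => rw [← hγy]
        exact inv_smul_smul γ y₀
      have e2 : dist (γ⁻¹ • b) (γ⁻¹ • y₀) = dist b y₀ := hisomY γ⁻¹ b y₀
      rw [hy] at e2
      simp only [Metric.mem_closedBall]
      rw [e2]
      exact hbC
  -- for frequently many i, dX (x i) (x' i) is bounded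
  have hfreq : ∃ᶠ i in atTop, dX (x i) (x' i) ≤ D + B₀ + D := by
    refine hR.mono fun i hi => ?_
    set h : Γ := (g i)⁻¹ * g' i with hhdef
    have haK : (g i)⁻¹ • ((x i, y i) : Xh × Y) ∈ K₀ :=
      hmemK₀ (g i) (x i) (y i) (hg i) (hxX i) (hgD i) (hC i).1
    have hbK : (g' i)⁻¹ • ((x' i, y' i) : Xh × Y) ∈ K₀ :=
      hmemK₀ (g' i) (x' i) (y' i) (hg' i) (hx'X i) (hg'D i) (hC i).2
    have hhb : h • ((g' i)⁻¹ • ((x' i, y' i) : Xh × Y)) = (g i)⁻¹ • ((x' i, y' i) : Xh × Y) := by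
      rw [hhdef, mul_smul, smul_inv_smul]
    have hd1 : dΓ ((g i)⁻¹ • ((x i, y i) : Xh × Y)) ((g i)⁻¹ • ((x' i, y' i) : Xh × Y))
        = dΓ (x i, y i) (x' i, y' i) := hinv (g i)⁻¹ _ _
    have hhbK : h • ((g' i)⁻¹ • ((x' i, y' i) : Xh × Y)) ∈ K := by
      rw [hhb]
      have t1 := htri p₀ ((g i)⁻¹ • ((x i, y i) : Xh × Y)) ((g i)⁻¹ • ((x' i, y' i) : Xh × Y))
      have t2 : dΓ p₀ ((g i)⁻¹ • ((x i, y i) : Xh × Y)) ≤ M := hzmax _ haK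
      have t3 : dΓ (x i, y i) (x' i, y' i) ≤ R' := le_trans hi.le (le_max_left R 0)
      rw [hd1] at t1
      simp only [hKdef, Set.mem_setOf_eq]
      linarith
    have hhF : h ∈ {γ : Γ | ∃ p ∈ K, γ • p ∈ K} :=
      ⟨(g' i)⁻¹ • ((x' i, y' i) : Xh × Y), hK₀K hbK, hhbK⟩
    have hB : dX x₀ (h • x₀) ≤ B₀ := hB₀ ⟨h, hhF, rfl⟩
    -- now the triangle inequality chain
    have hgx : g i • x₀ ∈ X := hXinv _ _ hx₀
    have hg'x : g' i • x₀ ∈ X := hXinv _ _ hx₀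
    have hhx : h • x₀ ∈ X := hXinv _ _ hx₀
    have e3 : dX (g i • x₀) (g i • (h • x₀)) = dX x₀ (h • x₀) := hdXinv (g i) x₀ hx₀ _ hhx
    have e4 : g i • (h • x₀) = g' i • x₀ := by
      rw [hhdef, ← mul_smul, mul_inv_cancel_left]
    rw [e4] at e3
    have t4 := hdXtri (x i) (hxX i) (g i • x₀) hgx (x' i) (hx'X i)
    have t5 := hdXtri (g i • x₀) hgx (g' i • x₀) hg'x (x' i) (hx'X i)
    have t6 : dX (g' i • x₀) (x' i) ≤ D := by
      rw [hdXsymm _ hg'x _ (hx'X i)]; exact hg'D i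
    rw [e3] at t5
    linarith [hgD i]
  obtain ⟨i, h1, h2⟩ := (hfreq.and_eventually (hdiv.eventually_gt_atTop (D + B₀ + D))).exists
  exact absurd h1 (not_le.2 h2)
end

section
/- Let A₁, A₂ ⊆ A and B₁, B₂ ⊆ B be subsets such that: (i) for all sequences a_i ∈ A₁ and a_i' ∈ A₂ that each leave every compact subset of A, d_X(f(a_i), f(a_i')) → ∞; and (ii) for all sequences b_i ∈ B₁ and b_i' ∈ B₂ that each leave every compact subset of B, d_Y(g(b_i), g(b_i')) → ∞. Then for all sequences (a_i, b_i) ∈ A₁ × B₁ and (a_i', b_i') ∈ A₂ × B₂ that each leave every compact subset of A × B, we have d_Γ((f(a_i), g(b_i)), (f(a_i'), g(b_i'))) → ∞. -/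
open Filter Topology

/-- the expanding property of `h = f × g` in Theorem `S`.
With the full setup of Theorem `S`, suppose `A₁, A₂ ⊆ A` and `B₁, B₂ ⊆ B` are
such that (i) for any sequences in `A₁` and `A₂` each leaving every compact set
of `A`, the `dX`-distances of the `f`-images diverge, and (ii) similarly for
`B₁, B₂`, `g` and `dY`.  Then for any sequences in `A₁ × B₁` and `A₂ × B₂` each
leaving every compact set of `A × B`, the `dΓ`-distances of the images under
`h = f × g` diverge. -/
theorem stmt3
    {Γ : Type*} [Group Γ]
    {Xh : Type*} [TopologicalSpace Xh] [MulAction Γ Xh]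
    (hcont : ∀ γ : Γ, Continuous (fun x : Xh => γ • x))
    {Y : Type*} [MetricSpace Y] [ProperSpace Y] [MulAction Γ Y]
    (hisomY : ∀ (γ : Γ) (y y' : Y), dist (γ • y) (γ • y') = dist y y')
    (X : Set Xh)
    (hXinv : ∀ (γ : Γ), ∀ x ∈ X, γ • x ∈ X)
    (dX : Xh → Xh → ℝ)
    (hdXsymm : ∀ p ∈ X, ∀ q ∈ X, dX p q = dX q p)
    (hdXtri : ∀ p ∈ X, ∀ q ∈ X, ∀ r ∈ X, dX p r ≤ dX p q + dX q r)
    (hdXeq : ∀ p ∈ X, ∀ q ∈ X, (dX p q = 0 ↔ p = q))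
    (hdXinv : ∀ (γ : Γ), ∀ p ∈ X, ∀ q ∈ X, dX (γ • p) (γ • q) = dX p q)
    (hdXproper : ∀ p ∈ X, ∀ r : ℝ, IsCompact {q ∈ X | dX p q ≤ r})
    (hdXtopo : ∀ p ∈ X, ∀ s : Set Xh, s ∈ 𝓝[X] p ↔ ∃ ε > 0, {q ∈ X | dX p q < ε} ⊆ s)
    -- the diagonal action of `Γ` on `X̂ × Y` is properly discontinuous and cocompact
    (hpd : ∀ K : Set (Xh × Y), IsCompact K → {γ : Γ | ∃ p ∈ K, γ • p ∈ K}.Finite)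
    (hcocompact : ∃ K : Set (Xh × Y), IsCompact K ∧ ∀ p : Xh × Y, ∃ γ : Γ, γ • p ∈ K)
    -- `dΓ` is a `Γ`-invariant proper metric on `X̂ × Y` inducing the product topology
    (dΓ : (Xh × Y) → (Xh × Y) → ℝ)
    (hsymm : ∀ p q, dΓ p q = dΓ q p)
    (htri : ∀ p q r, dΓ p r ≤ dΓ p q + dΓ q r)
    (heq : ∀ p q, dΓ p q = 0 ↔ p = q)
    (hinv : ∀ (γ : Γ) (p q : Xh × Y), dΓ (γ • p) (γ • q) = dΓ p q)
    (hproper : ∀ (p : Xh × Y) (r : ℝ), IsCompact {q | dΓ p q ≤ r})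
    (htopo : ∀ (p : Xh × Y) (s : Set (Xh × Y)),
      s ∈ 𝓝 p ↔ ∃ ε > 0, {q | dΓ p q < ε} ⊆ s)
    -- basepoints
    (x₀ : Xh) (hx₀ : x₀ ∈ X) (y₀ : Y)
    -- `A` and `B` are locally compact, σ-compact, metrizable Hausdorff spaces
    {A : Type*} [TopologicalSpace A] [LocallyCompactSpace A] [SigmaCompactSpace A]
    [T2Space A] [TopologicalSpace.MetrizableSpace A]
    {B : Type*} [TopologicalSpace B] [LocallyCompactSpace B] [SigmaCompactSpace B]
    [T2Space B] [TopologicalSpace.MetrizableSpace B]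
    -- `f : A → X` is continuous and metrically proper
    (f : A → Xh) (hfX : ∀ a, f a ∈ X) (hfcont : Continuous f)
    (hfproper : ∀ p ∈ X, ∀ r : ℝ, ∃ K : Set A, IsCompact K ∧ {a | dX p (f a) ≤ r} ⊆ K)
    -- `g : B → Y` is continuous and metrically proper
    (g : B → Y) (hgcont : Continuous g)
    (hgproper : ∀ (y : Y) (r : ℝ), ∃ K : Set B, IsCompact K ∧
      g ⁻¹' (Metric.closedBall y r) ⊆ K)
    -- every point of `f(A)` lies within `dX`-distance `D` of `Stab_Γ(y₀) • x₀`
    (D : ℝ) (hD : 0 < D)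
    (horb : ∀ a : A, ∃ γ : Γ, γ • y₀ = y₀ ∧ dX (f a) (γ • x₀) ≤ D)
    -- the subsets
    (A₁ A₂ : Set A) (B₁ B₂ : Set B)
    -- (i): images under `f` of sequences in `A₁`, `A₂` leaving every compact set diverge
    (hAdiv : ∀ a a' : ℕ → A, (∀ i, a i ∈ A₁) → (∀ i, a' i ∈ A₂) →
      (∀ C : Set A, IsCompact C → {i | a i ∈ C}.Finite) →
      (∀ C : Set A, IsCompact C → {i | a' i ∈ C}.Finite) →
      Tendsto (fun i => dX (f (a i)) (f (a' i))) atTop atTop)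
    -- (ii): images under `g` of sequences in `B₁`, `B₂` leaving every compact set diverge
    (hBdiv : ∀ b b' : ℕ → B, (∀ i, b i ∈ B₁) → (∀ i, b' i ∈ B₂) →
      (∀ C : Set B, IsCompact C → {i | b i ∈ C}.Finite) →
      (∀ C : Set B, IsCompact C → {i | b' i ∈ C}.Finite) →
      Tendsto (fun i => dist (g (b i)) (g (b' i))) atTop atTop) :
    ∀ (a a' : ℕ → A) (b b' : ℕ → B),
      (∀ i, a i ∈ A₁) → (∀ i, b i ∈ B₁) → (∀ i, a' i ∈ A₂) → (∀ i, b' i ∈ B₂) →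
      (∀ C : Set (A × B), IsCompact C → {i | (a i, b i) ∈ C}.Finite) →
      (∀ C : Set (A × B), IsCompact C → {i | (a' i, b' i) ∈ C}.Finite) →
      Tendsto (fun i => dΓ (f (a i), g (b i)) (f (a' i), g (b' i))) atTop atTop := by
  
  intro a a' b b' haA hbB ha'A hb'B hleave hleave'
  by_contra hnot
  rw [Filter.tendsto_atTop] at hnot
  push_neg at hnot
  obtain ⟨M, hM⟩ := hnot
  -- nonnegativity of dΓ
  have hnn : ∀ u v : Xh × Y, 0 ≤ dΓ u v := by
    intro u v
    have h1 := htri u v u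
    have h2 := hsymm v u
    have h3 := (heq u u).2 rfl
    linarith
  obtain ⟨i₀, hi₀⟩ := hM.exists
  have hMpos : 0 < M := lt_of_le_of_lt (hnn _ _) hi₀
  -- continuity of dΓ u ·
  have hcontd : ∀ u : Xh × Y, Continuous fun q => dΓ u q := by
    intro u
    rw [continuous_iff_continuousAt]
    intro q
    rw [ContinuousAt, Metric.tendsto_nhds]
    intro ε hε
    filter_upwards [(htopo q {q' | dΓ q q' < ε}).2 ⟨ε, hε, fun _ h => h⟩] with q' hq'
    have h1 := htri u q q'
    have h2 := htri u q' q
    have h3 := hsymm q' q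
    rw [Real.dist_eq, abs_lt]
    constructor <;> linarith
  obtain ⟨K, hKc, hKcover⟩ := hcocompact
  obtain ⟨MK, hMK⟩ := hKc.bddAbove_image ((hcontd (x₀, y₀)).continuousOn)
  have hMK' : ∀ u ∈ K, dΓ (x₀, y₀) u ≤ MK := fun u hu =>
    hMK (Set.mem_image_of_mem _ hu)
  obtain ⟨s₀, hs₀⟩ := ((hproper (x₀, y₀) (MK + M)).image
    continuous_snd).isBounded.subset_closedBall y₀
  have hMKnn : 0 ≤ MK := by
    obtain ⟨γ₀, hγ₀⟩ := hKcover (x₀, y₀)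
    exact le_trans (hnn _ _) (hMK' _ hγ₀)
  have hs₀nn : 0 ≤ s₀ := by
    have hmem : (x₀, y₀) ∈ {q | dΓ (x₀, y₀) q ≤ MK + M} := by
      have h0 : dΓ (x₀, y₀) (x₀, y₀) = 0 := (heq _ _).2 rfl
      simp only [Set.mem_setOf_eq, h0]
      linarith
    have := hs₀ ⟨(x₀, y₀), hmem, rfl⟩
    simpa using this
  -- key comparison: bounded dΓ implies bounded distance of second coordinates
  have hL1 : ∀ u v : Xh × Y, dΓ u v < M → dist u.2 v.2 ≤ 2 * s₀ := by
    intro u v huv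
    obtain ⟨γ, hγ⟩ := hKcover u
    have h1 : dΓ (x₀, y₀) (γ • u) ≤ MK := hMK' _ hγ
    have h2 : dΓ (x₀, y₀) (γ • v) ≤ MK + M := by
      have ht := htri (x₀, y₀) (γ • u) (γ • v)
      rw [hinv γ u v] at ht
      linarith
    have h3 : (γ • u).2 ∈ Metric.closedBall y₀ s₀ :=
      hs₀ ⟨γ • u, by simpa using le_trans h1 (by linarith), rfl⟩
    have h4 : (γ • v).2 ∈ Metric.closedBall y₀ s₀ := hs₀ ⟨γ • v, h2, rfl⟩
    rw [Metric.mem_closedBall, Prod.smul_snd] at h3 h4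
    calc dist u.2 v.2 = dist (γ • u.2) (γ • v.2) := (hisomY γ _ _).symm
      _ ≤ dist (γ • u.2) y₀ + dist y₀ (γ • v.2) := dist_triangle _ _ _
      _ ≤ 2 * s₀ := by rw [dist_comm y₀ (γ • v.2)]; linarith
  obtain ⟨n, hnmono, hn⟩ := extraction_of_frequently_atTop hM
  by_cases hcase : ∀ C : Set B, IsCompact C → {i | b (n i) ∈ C}.Finite
  · -- second coordinates both escape: contradiction with hBdiv
    have hb'esc : ∀ C : Set B, IsCompact C → {i | b' (n i) ∈ C}.Finite := by
      intro C hC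
      obtain ⟨sC, hsC⟩ := (hC.image hgcont).isBounded.subset_closedBall y₀
      obtain ⟨K', hK'c, hK'sub⟩ := hgproper y₀ (sC + 2 * s₀)
      refine (hcase K' hK'c).subset ?_
      intro i hi
      have h1 : dist (g (b' (n i))) y₀ ≤ sC :=
        Metric.mem_closedBall.1 (hsC (Set.mem_image_of_mem g hi))
      have h2 : dist (g (b (n i))) (g (b' (n i))) ≤ 2 * s₀ := hL1 _ _ (hn i)
      have h3 : g (b (n i)) ∈ Metric.closedBall y₀ (sC + 2 * s₀) := by
        rw [Metric.mem_closedBall]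
        calc dist (g (b (n i))) y₀
            ≤ dist (g (b (n i))) (g (b' (n i))) + dist (g (b' (n i))) y₀ :=
              dist_triangle _ _ _
          _ ≤ sC + 2 * s₀ := by linarith
      exact hK'sub h3
    have hdiv := hBdiv (fun i => b (n i)) (fun i => b' (n i))
      (fun i => hbB _) (fun i => hb'B _) hcase hb'esc
    obtain ⟨i, hi⟩ := (hdiv.eventually (eventually_ge_atTop (2 * s₀ + 1))).exists
    have := hL1 _ _ (hn i)
    simp only at hi this
    linarith
  · -- second coordinates stay in a compact set: contradiction with hAdiv
    push_neg at hcase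
    obtain ⟨C, hCc, hCinf⟩ := hcase
    have hCinf' : {i | b (n i) ∈ C}.Infinite := hCinf
    have hfreq : ∃ᶠ j in atTop,
        (dΓ (f (a j), g (b j)) (f (a' j), g (b' j)) < M ∧ b j ∈ C) := by
      rw [Filter.frequently_atTop]
      intro j₀
      obtain ⟨i, hiS, hilt⟩ := hCinf'.exists_gt j₀
      exact ⟨n i, le_trans (le_of_lt hilt) hnmono.le_apply, hn i, hiS⟩
    obtain ⟨m, hmmono, hm⟩ := extraction_of_frequently_atTop hfreq
    obtain ⟨rB, hrB⟩ := (hCc.image hgcont).isBounded.subset_closedBall y₀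
    obtain ⟨K', hK'c, hK'sub⟩ := hgproper y₀ (rB + 2 * s₀)
    have hgb : ∀ i, dist (g (b (m i))) y₀ ≤ rB := fun i =>
      Metric.mem_closedBall.1 (hrB (Set.mem_image_of_mem g (hm i).2))
    have hgb' : ∀ i, dist (g (b' (m i))) y₀ ≤ rB + 2 * s₀ := by
      intro i
      have h2 : dist (g (b (m i))) (g (b' (m i))) ≤ 2 * s₀ := hL1 _ _ (hm i).1
      calc dist (g (b' (m i))) y₀
          ≤ dist (g (b' (m i))) (g (b (m i))) + dist (g (b (m i))) y₀ :=
            dist_triangle _ _ _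
        _ ≤ rB + 2 * s₀ := by rw [dist_comm] at h2; have h3 := hgb i; linarith
    have hb'K : ∀ i, b' (m i) ∈ K' := fun i =>
      hK'sub (Metric.mem_closedBall.2 (hgb' i))
    -- the first coordinate sequences escape every compact set of A
    have haesc : ∀ CA : Set A, IsCompact CA → {i | a (m i) ∈ CA}.Finite := by
      intro CA hCA
      have h1 : {j | (a j, b j) ∈ CA ×ˢ C}.Finite := hleave _ (hCA.prod hCc)
      have h2 : (m ⁻¹' {j | (a j, b j) ∈ CA ×ˢ C}).Finite :=
        h1.preimage (hmmono.injective.injOn)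
      refine h2.subset ?_
      intro i hi
      exact ⟨hi, (hm i).2⟩
    have ha'esc : ∀ CA : Set A, IsCompact CA → {i | a' (m i) ∈ CA}.Finite := by
      intro CA hCA
      have h1 : {j | (a' j, b' j) ∈ CA ×ˢ K'}.Finite := hleave' _ (hCA.prod hK'c)
      have h2 : (m ⁻¹' {j | (a' j, b' j) ∈ CA ×ˢ K'}).Finite :=
        h1.preimage (hmmono.injective.injOn)
      refine h2.subset ?_
      intro i hi
      exact ⟨hi, hb'K i⟩
    have hdiv := hAdiv (fun i => a (m i)) (fun i => a' (m i))
      (fun i => haA _) (fun i => ha'A _) haesc ha'esc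
    -- choose stabilizer elements
    choose γF hγ1 hγ2 using horb
    -- the compact set L' and its dΓ-bound
    have hCD : IsCompact {q ∈ X | dX x₀ q ≤ D} := hdXproper x₀ hx₀ D
    have hL'c : IsCompact ({q ∈ X | dX x₀ q ≤ D} ×ˢ
        Metric.closedBall y₀ (rB + 2 * s₀)) :=
      hCD.prod (isCompact_closedBall _ _)
    obtain ⟨ML, hML⟩ := hL'c.bddAbove_image ((hcontd (x₀, y₀)).continuousOn)
    have hML' : ∀ u ∈ ({q ∈ X | dX x₀ q ≤ D} ×ˢ
        Metric.closedBall y₀ (rB + 2 * s₀)), dΓ (x₀, y₀) u ≤ ML := fun u hu =>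
      hML (Set.mem_image_of_mem _ hu)
    -- the finite set from proper discontinuity and its dX-bound
    have hWc : IsCompact {q | dΓ (x₀, y₀) q ≤ ML + M} := hproper (x₀, y₀) (ML + M)
    have hF : {γ : Γ | ∃ u ∈ {q | dΓ (x₀, y₀) q ≤ ML + M},
        γ • u ∈ {q | dΓ (x₀, y₀) q ≤ ML + M}}.Finite := hpd _ hWc
    obtain ⟨MX, hMX⟩ := (hF.image (fun γ => dX x₀ (γ • x₀))).bddAbove
    have hMX' : ∀ γ ∈ {γ : Γ | ∃ u ∈ {q | dΓ (x₀, y₀) q ≤ ML + M},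
        γ • u ∈ {q | dΓ (x₀, y₀) q ≤ ML + M}}, dX x₀ (γ • x₀) ≤ MX := fun γ hγ =>
      hMX (Set.mem_image_of_mem _ hγ)
    -- the key uniform bound on dX (f (a (m i))) (f (a' (m i)))
    have key : ∀ i, dX (f (a (m i))) (f (a' (m i))) ≤ 2 * D + MX := by
      intro i
      set α := a (m i) with hα
      set α' := a' (m i) with hα'
      set g₁ := γF α with hg₁
      set g₂ := γF α' with hg₂
      set q : Xh × Y := g₁⁻¹ • (f α, g (b (m i))) with hq
      set q' : Xh × Y := g₂⁻¹ • (f α', g (b' (m i))) with hq'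
      set τ := g₁⁻¹ * g₂ with hτ
      have hfαX : f α ∈ X := hfX α
      have hfα'X : f α' ∈ X := hfX α'
      have hq1X : g₁⁻¹ • f α ∈ X := hXinv _ _ hfαX
      have hq'1X : g₂⁻¹ • f α' ∈ X := hXinv _ _ hfα'X
      -- q ∈ L'
      have hqL : q ∈ ({q ∈ X | dX x₀ q ≤ D} ×ˢ
          Metric.closedBall y₀ (rB + 2 * s₀)) := by
        constructor
        · refine ⟨hq1X, ?_⟩
          have := hdXinv g₁ x₀ hx₀ (g₁⁻¹ • f α) hq1X
          rw [smul_inv_smul] at this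
          rw [show (q).1 = g₁⁻¹ • f α from rfl]
          rw [← this]
          rw [hdXsymm _ (hXinv g₁ x₀ hx₀) _ hfαX]
          exact hγ2 α
        · rw [show (q).2 = g₁⁻¹ • g (b (m i)) from rfl, Metric.mem_closedBall]
          have h1 : dist (g₁ • (g₁⁻¹ • g (b (m i)))) (g₁ • y₀)
              = dist (g₁⁻¹ • g (b (m i))) y₀ := hisomY g₁ _ _
          rw [smul_inv_smul, hγ1 α] at h1
          rw [← h1]
          exact le_trans (hgb i) (by linarith)
      -- q' ∈ L'
      have hq'L : q' ∈ ({q ∈ X | dX x₀ q ≤ D} ×ˢ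
          Metric.closedBall y₀ (rB + 2 * s₀)) := by
        constructor
        · refine ⟨hq'1X, ?_⟩
          have := hdXinv g₂ x₀ hx₀ (g₂⁻¹ • f α') hq'1X
          rw [smul_inv_smul] at this
          rw [show (q').1 = g₂⁻¹ • f α' from rfl]
          rw [← this]
          rw [hdXsymm _ (hXinv g₂ x₀ hx₀) _ hfα'X]
          exact hγ2 α'
        · rw [show (q').2 = g₂⁻¹ • g (b' (m i)) from rfl, Metric.mem_closedBall]
          have h1 : dist (g₂ • (g₂⁻¹ • g (b' (m i)))) (g₂ • y₀)
              = dist (g₂⁻¹ • g (b' (m i))) y₀ := hisomY g₂ _ _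
          rw [smul_inv_smul, hγ1 α'] at h1
          rw [← h1]
          exact hgb' i
      have hdq : dΓ (x₀, y₀) q ≤ ML := hML' _ hqL
      have hdq' : dΓ (x₀, y₀) q' ≤ ML := hML' _ hq'L
      -- dΓ q (τ • q') < M
      have hqτ : dΓ q (τ • q') < M := by
        have h1 : τ • q' = g₁⁻¹ • (f α', g (b' (m i))) := by
          rw [hτ, mul_smul, hq', smul_inv_smul]
        have h2 : dΓ q (τ • q') = dΓ (f α, g (b (m i))) (f α', g (b' (m i))) := by
          rw [h1, hq, hinv]
        rw [h2]
        exact (hm i).1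
      -- τ belongs to the finite set
      have hτF : τ ∈ {γ : Γ | ∃ u ∈ {q | dΓ (x₀, y₀) q ≤ ML + M},
          γ • u ∈ {q | dΓ (x₀, y₀) q ≤ ML + M}} := by
        refine ⟨q', ?_, ?_⟩
        · exact le_trans hdq' (by linarith)
        · have := htri (x₀, y₀) q (τ • q')
          exact le_trans this (by linarith)
      have hτb : dX x₀ (τ • x₀) ≤ MX := hMX' _ hτF
      -- assemble via triangle inequalities
      have hg₁X : g₁ • x₀ ∈ X := hXinv _ _ hx₀
      have hg₂X : g₂ • x₀ ∈ X := hXinv _ _ hx₀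
      have hτX : τ • x₀ ∈ X := hXinv _ _ hx₀
      have h12 : dX (g₁ • x₀) (g₂ • x₀) = dX x₀ (τ • x₀) := by
        have : g₂ • x₀ = g₁ • (τ • x₀) := by rw [hτ, mul_smul, smul_inv_smul]
        rw [this]
        exact hdXinv g₁ x₀ hx₀ (τ • x₀) hτX
      have t1 := hdXtri (f α) hfαX (g₁ • x₀) hg₁X (f α') hfα'X
      have t2 := hdXtri (g₁ • x₀) hg₁X (g₂ • x₀) hg₂X (f α') hfα'X
      have t3 : dX (g₂ • x₀) (f α') ≤ D := by
        rw [hdXsymm _ hg₂X _ hfα'X]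
        exact hγ2 α'
      have t4 : dX (f α) (g₁ • x₀) ≤ D := hγ2 α
      rw [h12] at t2
      linarith
    obtain ⟨i, hi⟩ := (hdiv.eventually (eventually_ge_atTop (2 * D + MX + 1))).exists
    have := key i
    linarith
end

section
/- For every n ≥ 1, the direct product (F₂)ⁿ of n copies of the free group of rank 2 admits a properly discontinuous action by homeomorphisms on ℝ^{2n}; combined with the lower bound this gives actdim((F₂)ⁿ) = 2n. -/
namespace Stmt10Aux

open FreeGroup

/-- The plane, as `Fin 2 → ℝ`. -/
abbrev E := Fin 2 → ℝ

/-- The other index of `Fin 2`. -/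
def oth (i : Fin 2) : Fin 2 := if i = 0 then 1 else 0

lemma oth_ne (i : Fin 2) : oth i ≠ i := by fin_cases i <;> decide

lemma oth_oth (i : Fin 2) : oth (oth i) = i := by fin_cases i <;> decide

lemma eq_or_eq_oth (i j : Fin 2) : j = i ∨ j = oth i := by
  fin_cases i <;> fin_cases j <;> simp [oth]

/-- Sign of a boolean. -/
def sgn (b : Bool) : ℝ := if b then 1 else -1

lemma sgn_mul_self (b : Bool) : sgn b * sgn b = 1 := by cases b <;> simp [sgn]

lemma sgn_not (b : Bool) : sgn (!b) = -sgn b := by cases b <;> simp [sgn]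

lemma abs_sgn (b : Bool) : |sgn b| = 1 := by cases b <;> simp [sgn]

lemma sgn_mul_le_abs (b : Bool) (x : ℝ) : sgn b * x ≤ |x| := by
  calc sgn b * x ≤ |sgn b * x| := le_abs_self _
  _ = |x| := by rw [abs_mul, abs_sgn, one_mul]

lemma abs_sgn_mul (b : Bool) (x : ℝ) : |sgn b * x| = |x| := by
  rw [abs_mul, abs_sgn, one_mul]

/-- The inverse letter. -/
def invL (ℓ : Fin 2 × Bool) : Fin 2 × Bool := (ℓ.1, !ℓ.2)

lemma invL_invL (ℓ : Fin 2 × Bool) : invL (invL ℓ) = ℓ := by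
  simp [invL]

lemma ne_invL_comm {ℓ m : Fin 2 × Bool} (h : m ≠ invL ℓ) : ℓ ≠ invL m := by
  intro he; exact h (by rw [he, invL_invL])

/-- The shear homeomorphism corresponding to a letter. -/
def stepFun (ℓ : Fin 2 × Bool) (q : E) : E :=
  fun j => if j = ℓ.1 then q j + sgn ℓ.2 * (2 + 2 * |q (oth ℓ.1)|) else q j

lemma step_self (ℓ : Fin 2 × Bool) (q : E) :
    stepFun ℓ q ℓ.1 = q ℓ.1 + sgn ℓ.2 * (2 + 2 * |q (oth ℓ.1)|) := by
  simp [stepFun]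

lemma step_oth (ℓ : Fin 2 × Bool) (q : E) :
    stepFun ℓ q (oth ℓ.1) = q (oth ℓ.1) := by
  simp [stepFun, oth_ne]

lemma step_inv (ℓ : Fin 2 × Bool) (q : E) :
    stepFun (invL ℓ) (stepFun ℓ q) = q := by
  funext j
  rcases eq_or_eq_oth ℓ.1 j with hj | hj
  · subst hj
    have h1 : stepFun (invL ℓ) (stepFun ℓ q) ℓ.1
        = stepFun ℓ q ℓ.1 + sgn (!ℓ.2) * (2 + 2 * |stepFun ℓ q (oth ℓ.1)|) :=
      step_self (invL ℓ) (stepFun ℓ q)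
    rw [h1, step_oth, step_self, sgn_not]
    ring
  · subst hj
    have h1 : stepFun (invL ℓ) (stepFun ℓ q) (oth ℓ.1) = stepFun ℓ q (oth ℓ.1) :=
      step_oth (invL ℓ) (stepFun ℓ q)
    rw [h1, step_oth]

/-- The shear as a permutation of the plane. -/
def stepPerm (ℓ : Fin 2 × Bool) : Equiv.Perm E where
  toFun := stepFun ℓ
  invFun := stepFun (invL ℓ)
  left_inv := fun q => step_inv ℓ q
  right_inv := fun q => by
    have := step_inv (invL ℓ) q
    rwa [invL_invL] at this

lemma stepPerm_inv (ℓ : Fin 2 × Bool) : (stepPerm ℓ)⁻¹ = stepPerm (invL ℓ) := by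
  ext q
  rfl

lemma continuous_stepFun (ℓ : Fin 2 × Bool) : Continuous (stepFun ℓ) := by
  apply continuous_pi
  intro j
  by_cases hj : j = ℓ.1
  · simp only [stepFun, hj, if_pos rfl]
    exact ((continuous_apply ℓ.1).add
      (continuous_const.mul (continuous_const.add
        (continuous_const.mul ((continuous_apply (oth ℓ.1)).abs)))))
  · simp only [stepFun, if_neg hj]
    exact continuous_apply j

/-- Ping-pong cone for a letter. -/
def Good (ℓ : Fin 2 × Bool) (q : E) : Prop :=
  |q (oth ℓ.1)| + 1 ≤ sgn ℓ.2 * q ℓ.1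

lemma norm_le_pair {q : E} {c : ℝ} (i : Fin 2) (hc : 0 ≤ c)
    (h1 : |q i| ≤ c) (h2 : |q (oth i)| ≤ c) : ‖q‖ ≤ c := by
  rw [pi_norm_le_iff_of_nonneg hc]
  intro j
  rcases eq_or_eq_oth i j with hj | hj <;> rw [hj, Real.norm_eq_abs]
  · exact h1
  · exact h2

lemma abs_le_norm (q : E) (i : Fin 2) : |q i| ≤ ‖q‖ := by
  have := norm_le_pi_norm q i
  rwa [Real.norm_eq_abs] at this

lemma sgn_mul_add (b : Bool) (x c : ℝ) : sgn b * (x + sgn b * c) = sgn b * x + c := by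
  cases b <;> simp [sgn] <;> ring

lemma Good.one_le_norm {ℓ : Fin 2 × Bool} {q : E} (h : Good ℓ q) : 1 ≤ ‖q‖ := by
  have hGo : |q (oth ℓ.1)| + 1 ≤ sgn ℓ.2 * q ℓ.1 := h
  have ho := abs_nonneg (q (oth ℓ.1))
  calc (1:ℝ) ≤ sgn ℓ.2 * q ℓ.1 := by linarith
    _ ≤ |q ℓ.1| := sgn_mul_le_abs _ _
    _ ≤ ‖q‖ := abs_le_norm q ℓ.1

/-- If a point is in the cone of a letter, its norm is bounded by that
coordinate. -/
lemma Good.norm_le {ℓ : Fin 2 × Bool} {q : E} (h : Good ℓ q) :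
    ‖q‖ ≤ sgn ℓ.2 * q ℓ.1 := by
  have hGo : |q (oth ℓ.1)| + 1 ≤ sgn ℓ.2 * q ℓ.1 := h
  have ho := abs_nonneg (q (oth ℓ.1))
  apply norm_le_pair ℓ.1 (by linarith)
  · rw [← abs_sgn_mul ℓ.2 (q ℓ.1)]
    exact le_of_eq (abs_of_nonneg (by linarith))
  · linarith

/-- Escape: if the state is not in the cone of the inverse letter, then applying
the letter lands in the cone of the letter. -/
lemma bad_step {ℓ : Fin 2 × Bool} {q : E} (h : ¬ Good (invL ℓ) q) :
    Good ℓ (stepFun ℓ q) := by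
  have h' : ¬ (|q (oth ℓ.1)| + 1 ≤ sgn (!ℓ.2) * q ℓ.1) := h
  rw [sgn_not] at h'
  push_neg at h'
  show |stepFun ℓ q (oth ℓ.1)| + 1 ≤ sgn ℓ.2 * stepFun ℓ q ℓ.1
  rw [step_oth, step_self, sgn_mul_add]
  have ho := abs_nonneg (q (oth ℓ.1))
  linarith

lemma good_step_same {ℓ : Fin 2 × Bool} {q : E} (h : Good ℓ q) :
    Good ℓ (stepFun ℓ q) ∧ ‖q‖ + 2 ≤ ‖stepFun ℓ q‖ := by
  have hGo : |q (oth ℓ.1)| + 1 ≤ sgn ℓ.2 * q ℓ.1 := h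
  have hq : ‖q‖ ≤ sgn ℓ.2 * q ℓ.1 := h.norm_le
  have ho := abs_nonneg (q (oth ℓ.1))
  have key : sgn ℓ.2 * stepFun ℓ q ℓ.1
      = sgn ℓ.2 * q ℓ.1 + (2 + 2 * |q (oth ℓ.1)|) := by
    rw [step_self, sgn_mul_add]
  constructor
  · show |stepFun ℓ q (oth ℓ.1)| + 1 ≤ sgn ℓ.2 * stepFun ℓ q ℓ.1
    rw [step_oth, key]
    linarith
  · calc ‖q‖ + 2 ≤ sgn ℓ.2 * stepFun ℓ q ℓ.1 := by rw [key]; linarith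
      _ ≤ |stepFun ℓ q ℓ.1| := sgn_mul_le_abs _ _
      _ ≤ ‖stepFun ℓ q‖ := abs_le_norm _ _

/-- Absorption: from the cone of `ℓ`, any non-cancelling letter `ℓ'` lands in the
cone of `ℓ'`, and the norm grows by at least `2`. -/
lemma good_step {ℓ ℓ' : Fin 2 × Bool} {q : E} (h : Good ℓ q) (hne : ℓ' ≠ invL ℓ) :
    Good ℓ' (stepFun ℓ' q) ∧ ‖q‖ + 2 ≤ ‖stepFun ℓ' q‖ := by
  have hq : ‖q‖ ≤ sgn ℓ.2 * q ℓ.1 := h.norm_le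
  have hGo : |q (oth ℓ.1)| + 1 ≤ sgn ℓ.2 * q ℓ.1 := h
  have ho := abs_nonneg (q (oth ℓ.1))
  rcases eq_or_eq_oth ℓ.1 ℓ'.1 with h1 | h1
  · -- same axis; by non-cancellation the signs agree, so ℓ' = ℓ
    have hb : ℓ'.2 = ℓ.2 := by
      by_contra hb
      apply hne
      have h2 : ℓ'.2 = !ℓ.2 := by
        cases hx : ℓ.2 <;> cases hy : ℓ'.2 <;> simp_all
      show ℓ' = (ℓ.1, !ℓ.2)
      rw [← h1, ← h2]
    have hℓ' : ℓ' = ℓ := by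
      show ℓ' = ℓ
      rw [show ℓ = (ℓ.1, ℓ.2) from rfl, ← h1, ← hb]
    rw [hℓ']
    exact good_step_same h
  · -- other axis
    have hoth : oth ℓ'.1 = ℓ.1 := by rw [h1, oth_oth]
    have hstep : sgn ℓ'.2 * stepFun ℓ' q ℓ'.1
        = sgn ℓ'.2 * q ℓ'.1 + (2 + 2 * |q ℓ.1|) := by
      rw [step_self, hoth, sgn_mul_add]
    have hlow : -|q ℓ'.1| ≤ sgn ℓ'.2 * q ℓ'.1 := by
      have h3 := sgn_mul_le_abs (!ℓ'.2) (q ℓ'.1)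
      rw [sgn_not] at h3
      linarith
    have habsi : |q ℓ.1| = sgn ℓ.2 * q ℓ.1 := by
      rw [← abs_sgn_mul ℓ.2 (q ℓ.1)]
      exact abs_of_nonneg (by linarith)
    have hsmall : |q ℓ'.1| ≤ |q ℓ.1| - 1 := by
      rw [habsi, h1]
      linarith
    have hval : |q ℓ.1| + 3 ≤ sgn ℓ'.2 * stepFun ℓ' q ℓ'.1 := by
      rw [hstep]
      linarith
    constructor
    · show |stepFun ℓ' q (oth ℓ'.1)| + 1 ≤ sgn ℓ'.2 * stepFun ℓ' q ℓ'.1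
      rw [step_oth, hoth]
      linarith
    · have h4 : sgn ℓ'.2 * stepFun ℓ' q ℓ'.1 ≤ ‖stepFun ℓ' q‖ :=
        le_trans (sgn_mul_le_abs _ _) (abs_le_norm _ _)
      have hqle : ‖q‖ ≤ |q ℓ.1| := by rw [habsi]; exact hq
      linarith

/-- Weak decrease: applying a letter to a state in the cone of its inverse does not
increase the norm. -/
lemma weak_dec {ℓ : Fin 2 × Bool} {q : E} (h : Good (invL ℓ) q) :
    ‖stepFun ℓ q‖ ≤ ‖q‖ := by
  have h0 : |q (oth ℓ.1)| + 1 ≤ sgn (!ℓ.2) * q ℓ.1 := h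
  rw [sgn_not] at h0
  have h' : |q (oth ℓ.1)| + 1 ≤ -(sgn ℓ.2 * q ℓ.1) := by linarith
  have hkey : sgn ℓ.2 * stepFun ℓ q ℓ.1
      = sgn ℓ.2 * q ℓ.1 + (2 + 2 * |q (oth ℓ.1)|) := by
    rw [step_self, sgn_mul_add]
  have ho := abs_nonneg (q (oth ℓ.1))
  have hvabs : |q ℓ.1| = -(sgn ℓ.2 * q ℓ.1) := by
    rw [← abs_sgn_mul ℓ.2 (q ℓ.1)]
    exact abs_of_nonpos (by linarith)
  have hub : |stepFun ℓ q ℓ.1| ≤ -(sgn ℓ.2 * q ℓ.1) := by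
    rw [← abs_sgn_mul ℓ.2, abs_le]
    constructor <;> rw [hkey] <;> linarith
  have hn : ‖stepFun ℓ q‖ ≤ -(sgn ℓ.2 * q ℓ.1) := by
    apply norm_le_pair ℓ.1 (by linarith) hub
    rw [step_oth]
    linarith
  have h5 := abs_le_norm q ℓ.1
  linarith

/-- Strict decrease: two consecutive "bad" steps strictly decrease the norm. -/
lemma dec {ℓ m : Fin 2 × Bool} {q : E} (h : Good (invL ℓ) q)
    (h2 : Good m (stepFun ℓ q)) (hm : m ≠ ℓ) :
    ‖stepFun ℓ q‖ ≤ ‖q‖ - 1 := by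
  have h0 : |q (oth ℓ.1)| + 1 ≤ sgn (!ℓ.2) * q ℓ.1 := h
  rw [sgn_not] at h0
  have h' : |q (oth ℓ.1)| + 1 ≤ -(sgn ℓ.2 * q ℓ.1) := by linarith
  have hkey : sgn ℓ.2 * stepFun ℓ q ℓ.1
      = sgn ℓ.2 * q ℓ.1 + (2 + 2 * |q (oth ℓ.1)|) := by
    rw [step_self, sgn_mul_add]
  have ho := abs_nonneg (q (oth ℓ.1))
  have hvabs : |q ℓ.1| = -(sgn ℓ.2 * q ℓ.1) := by
    rw [← abs_sgn_mul ℓ.2 (q ℓ.1)]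
    exact abs_of_nonpos (by linarith)
  have hmain : |stepFun ℓ q ℓ.1| ≤ -(sgn ℓ.2 * q ℓ.1) - 1 := by
    rcases eq_or_eq_oth ℓ.1 m.1 with h1 | h1
    · -- same axis: m = invL ℓ
      have hb : m.2 = !ℓ.2 := by
        by_contra hb
        apply hm
        have h3 : m.2 = ℓ.2 := by
          cases hx : ℓ.2 <;> cases hy : m.2 <;> simp_all
        rw [show ℓ = (ℓ.1, ℓ.2) from rfl, ← h1, ← h3]
      have hG2 : |stepFun ℓ q (oth m.1)| + 1 ≤ sgn m.2 * stepFun ℓ q m.1 := h2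
      rw [h1, hb, sgn_not, step_oth] at hG2
      rw [← abs_sgn_mul ℓ.2, abs_le]
      constructor <;> [skip; skip] <;> linarith [hkey, hG2]
    · -- other axis: the cone condition on the unchanged coordinate bounds us
      have hoth' : oth m.1 = ℓ.1 := by rw [h1, oth_oth]
      have hG2 : |stepFun ℓ q (oth m.1)| + 1 ≤ sgn m.2 * stepFun ℓ q m.1 := h2
      rw [hoth'] at hG2
      have hunch : stepFun ℓ q m.1 = q m.1 := by
        rw [h1]
        exact step_oth ℓ q
      rw [hunch] at hG2
      have hb2 : sgn m.2 * q m.1 ≤ |q m.1| := sgn_mul_le_abs _ _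
      have h3 : |q m.1| ≤ -(sgn ℓ.2 * q ℓ.1) - 1 := by
        rw [h1]
        linarith
      linarith
  have hn : ‖stepFun ℓ q‖ ≤ -(sgn ℓ.2 * q ℓ.1) - 1 := by
    apply norm_le_pair ℓ.1 (by linarith) hmain
    rw [step_oth]
    linarith
  have h5 := abs_le_norm q ℓ.1
  linarith

/-- The main ping-pong induction along a reduced word (written as a list of letters,
the head being applied last). -/
lemma main_lemma (q : E) :
    ∀ (t : List (Fin 2 × Bool)) (ℓ : Fin 2 × Bool),
    (ℓ :: t).Chain' (fun a c => c ≠ invL a) →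
    (Good ℓ ((ℓ :: t).foldr stepFun q) ∧ ∃ g : ℕ, 1 ≤ g ∧ (g : ℝ) ≤ t.length + 1 ∧
        2*(g:ℝ) - 1 ≤ ‖(ℓ :: t).foldr stepFun q‖ ∧ (t.length : ℝ) + 1 ≤ ‖q‖ + g)
    ∨ (¬ Good ℓ ((ℓ :: t).foldr stepFun q) ∧
        (t.length : ℝ) + 1 ≤ ‖q‖ - ‖t.foldr stepFun q‖ + 1) := by
  intro t
  induction t with
  | nil =>
    intro ℓ _
    by_cases hg : Good ℓ (stepFun ℓ q)
    · left
      refine ⟨hg, 1, le_refl 1, ?_, ?_, ?_⟩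
      · simp only [List.length_nil, Nat.cast_zero, Nat.cast_one]
        linarith
      · have h1 := hg.one_le_norm
        have h2 : List.foldr stepFun q [ℓ] = stepFun ℓ q := rfl
        rw [h2]
        push_cast
        linarith
      · simp only [List.length_nil, Nat.cast_zero, Nat.cast_one]
        linarith [norm_nonneg q]
    · right
      refine ⟨hg, ?_⟩
      have h2 : List.foldr stepFun q ([] : List (Fin 2 × Bool)) = q := rfl
      rw [h2]
      simp only [List.length_nil, Nat.cast_zero]
      linarith
  | cons ℓ₀ t' ih =>
    intro ℓ hch
    simp only [List.Chain', List.isChain_cons_cons] at hch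
    obtain ⟨hrel, hch'⟩ := hch
    set q'' : E := t'.foldr stepFun q with hq''
    have hfold : (ℓ₀ :: t').foldr stepFun q = stepFun ℓ₀ q'' := rfl
    set q' : E := stepFun ℓ₀ q'' with hq'
    have hfold2 : (ℓ :: ℓ₀ :: t').foldr stepFun q = stepFun ℓ q' := rfl
    rcases ih ℓ₀ hch' with ⟨hg0, g, hg1, hgle, hnorm, hlen⟩ | ⟨hbad, hlen⟩
    · -- tail ends well: absorption
      rw [hfold] at hg0 hnorm
      have hne : ℓ ≠ invL ℓ₀ := ne_invL_comm hrel
      obtain ⟨hg', hgrow⟩ := good_step hg0 hne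
      left
      refine ⟨by rw [hfold2]; exact hg', g + 1, by omega, ?_, ?_, ?_⟩
      · push_cast
        push_cast at hgle
        simp only [List.length_cons]
        push_cast
        linarith
      · rw [hfold2]
        push_cast
        linarith
      · simp only [List.length_cons]
        push_cast
        push_cast at hlen
        linarith
    · -- tail ends badly
      rw [hfold] at hbad
      have hGinv : Good (invL ℓ₀) q'' := by
        by_contra hc
        exact hbad (bad_step hc)
      have h1 : (1:ℝ) ≤ ‖q''‖ := hGinv.one_le_norm
      by_cases hgp : Good ℓ (stepFun ℓ q')
      · left
        refine ⟨by rw [hfold2]; exact hgp, 1, le_refl 1, ?_, ?_, ?_⟩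
        · simp only [List.length_cons]
          push_cast
          have h0 : (0:ℝ) ≤ (t'.length : ℝ) := Nat.cast_nonneg _
          linarith
        · rw [hfold2]
          have := hgp.one_le_norm
          push_cast
          linarith
        · simp only [List.length_cons]
          push_cast
          push_cast at hlen
          linarith
      · right
        have hinv : Good (invL ℓ) q' := by
          by_contra hc
          exact hgp (bad_step hc)
        have hm : invL ℓ ≠ ℓ₀ := Ne.symm hrel
        have hdec : ‖q'‖ ≤ ‖q''‖ - 1 := dec hGinv hinv hm
        refine ⟨by rw [hfold2]; exact hgp, ?_⟩
        simp only [List.length_cons]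
        push_cast
        push_cast at hlen
        have : List.foldr stepFun q (ℓ₀ :: t') = q' := rfl
        rw [this]
        linarith

/-- No reduced word (in the sense of `FreeGroup.reduce`) contains a cancelling pair;
hence it is a chain for `fun a c => c ≠ invL a`. -/
lemma chain'_aux : ∀ (l : List (Fin 2 × Bool)),
    (∀ (L₂ : List (Fin 2 × Bool)) (x : Fin 2) (b : Bool) (L₃ : List (Fin 2 × Bool)),
      l ≠ L₂ ++ (x, b) :: (x, !b) :: L₃) →
    l.Chain' (fun a c => c ≠ invL a) := by
  intro l
  induction l with
  | nil => intro _; simp [List.Chain']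
  | cons a t ih =>
    intro h
    cases t with
    | nil => simp [List.Chain']
    | cons c t' =>
      simp only [List.Chain', List.isChain_cons_cons]
      constructor
      · intro hc
        apply h [] a.1 a.2 t'
        simp only [List.nil_append]
        rw [hc]
        rfl
      · apply ih
        intro L₂ x b L₃ hEq
        exact h (a :: L₂) x b L₃ (by rw [hEq]; rfl)

lemma chain'_toWord (δ : FreeGroup (Fin 2)) :
    δ.toWord.Chain' (fun a c => c ≠ invL a) := by
  apply chain'_aux
  intro L₂ x b L₃ hEq
  have h2 : reduce δ.toWord = L₂ ++ (x, b) :: (x, !b) :: L₃ := by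
    rw [FreeGroup.reduce_toWord]
    exact hEq
  exact FreeGroup.reduce.not (p := False) h2

/-- The `F₂`-action on the plane. -/
def rho1 : FreeGroup (Fin 2) →* Equiv.Perm E :=
  FreeGroup.lift (fun i => stepPerm (i, true))

lemma prod_map_apply (L : List (Fin 2 × Bool)) (q : E) :
    (List.prod (L.map fun x => stepPerm x) : Equiv.Perm E) q = L.foldr stepFun q := by
  induction L generalizing q with
  | nil => rfl
  | cons x L ih =>
    rw [List.map_cons, List.prod_cons, Equiv.Perm.mul_apply, ih]
    rfl

lemma rho1_apply (δ : FreeGroup (Fin 2)) (q : E) :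
    rho1 δ q = δ.toWord.foldr stepFun q := by
  have h1 : rho1 (mk δ.toWord)
      = List.prod (δ.toWord.map fun x =>
          cond x.2 (stepPerm (x.1, true)) (stepPerm (x.1, true))⁻¹) :=
    FreeGroup.lift_mk
  have h2 : (δ.toWord.map fun x =>
      cond x.2 (stepPerm (x.1, true)) (stepPerm (x.1, true))⁻¹)
      = δ.toWord.map fun x => stepPerm x := by
    apply List.map_congr_left
    intro x _
    obtain ⟨i, b⟩ := x
    cases b
    · show (stepPerm (i, true))⁻¹ = stepPerm (i, false)
      rw [stepPerm_inv]
      rfl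
    · rfl
  calc rho1 δ q = rho1 (mk δ.toWord) q := by rw [FreeGroup.mk_toWord]
    _ = (List.prod (δ.toWord.map fun x => stepPerm x) : Equiv.Perm E) q := by
        rw [h1, h2]
    _ = δ.toWord.foldr stepFun q := prod_map_apply δ.toWord q

lemma continuous_rho1 (δ : FreeGroup (Fin 2)) : Continuous ⇑(rho1 δ) := by
  induction δ using FreeGroup.induction_on with
  | C1 =>
    rw [_root_.map_one]
    exact continuous_id
  | of x =>
    show Continuous ⇑(rho1 (FreeGroup.of x))
    rw [show rho1 (FreeGroup.of x) = stepPerm (x, true) from FreeGroup.lift_apply_of]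
    exact continuous_stepFun _
  | inv_of x _ =>
    show Continuous ⇑(rho1 (FreeGroup.of x)⁻¹)
    rw [_root_.map_inv, show rho1 (FreeGroup.of x) = stepPerm (x, true) from FreeGroup.lift_apply_of,
      stepPerm_inv]
    exact continuous_stepFun _
  | mul x y hx hy =>
    rw [_root_.map_mul]
    exact hx.comp hy

/-- The key length bound: elements moving a bounded set near itself have a
bounded word length. -/
lemma length_bound {R : ℝ} (hR : 0 ≤ R) (δ : FreeGroup (Fin 2)) (q : E)
    (hq : ‖q‖ ≤ R) (hp : ‖rho1 δ q‖ ≤ R) : (δ.toWord.length : ℝ) ≤ 2 * R + 1 := by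
  rw [rho1_apply] at hp
  cases hl : δ.toWord with
  | nil =>
    simp only [List.length_nil, Nat.cast_zero]
    linarith
  | cons ℓ t =>
    have hch := chain'_toWord δ
    rw [hl] at hch hp
    rcases main_lemma q t ℓ hch with ⟨_, g, hg1, _, hnorm, hlen⟩ | ⟨hbad, hlen⟩
    · have hgR : 2*(g:ℝ) - 1 ≤ R := le_trans hnorm hp
      simp only [List.length_cons]
      push_cast
      have hg1' : (1:ℝ) ≤ (g:ℝ) := by exact_mod_cast hg1
      linarith
    · have hGinv : Good (invL ℓ) (t.foldr stepFun q) := by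
        by_contra hc
        exact hbad (bad_step hc)
      have h1 : (1:ℝ) ≤ ‖t.foldr stepFun q‖ := hGinv.one_le_norm
      simp only [List.length_cons]
      push_cast
      linarith

/-- Proper discontinuity of the core `F₂`-action on the plane. -/
lemma core_finite {K' : Set E} (hK : IsCompact K') :
    {δ : FreeGroup (Fin 2) | ∃ q ∈ K', rho1 δ q ∈ K'}.Finite := by
  obtain ⟨C, hC⟩ := (hK.isBounded).exists_norm_le
  set R : ℝ := max C 0 with hRdef
  have hR : 0 ≤ R := le_max_right _ _
  have hbound : ∀ q ∈ K', ‖q‖ ≤ R := fun q hq => le_trans (hC q hq) (le_max_left _ _)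
  apply Set.Finite.subset
    (Set.Finite.preimage (Set.injOn_of_injective FreeGroup.toWord_injective)
      (List.finite_length_le (Fin 2 × Bool) ⌈2 * R + 1⌉₊))
  rintro δ ⟨q, hq, hpq⟩
  have hlen : (δ.toWord.length : ℝ) ≤ 2 * R + 1 :=
    length_bound hR δ q (hbound q hq) (hbound _ hpq)
  have : (δ.toWord.length : ℝ) ≤ (⌈2 * R + 1⌉₊ : ℝ) := le_trans hlen (Nat.le_ceil _)
  exact_mod_cast this

end Stmt10Aux

open Stmt10Aux in
/-- `actdim ((F₂)ⁿ) ≤ 2n`, realizing the action dimension.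
For every `n ≥ 1`, the direct product `(F₂)ⁿ` of `n` copies of the free group
of rank `2` admits a properly discontinuous action by homeomorphisms on
`ℝ^{2n}`; combined with the lower bound this gives `actdim ((F₂)ⁿ) = 2n`. -/
theorem stmt10 (n : ℕ) (hn : 1 ≤ n) :
    ∃ ρ : (Fin n → FreeGroup (Fin 2)) →* Equiv.Perm (Fin (2 * n) → ℝ),
      (∀ γ, Continuous (ρ γ)) ∧
      ∀ K : Set (Fin (2 * n) → ℝ), IsCompact K →
        {γ | ∃ x ∈ K, ρ γ x ∈ K}.Finite := by
  classical
  -- identify `Fin (2*n) → ℝ` with `Fin n → (Fin 2 → ℝ)`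
  let e₁ : Fin (2 * n) ≃ Fin n × Fin 2 :=
    (finCongr (by ring)).trans (finProdFinEquiv (m := n) (n := 2)).symm
  let e : (Fin (2 * n) → ℝ) ≃ (Fin n → E) :=
    (Equiv.arrowCongr e₁ (Equiv.refl ℝ)).trans (Equiv.curry _ _ _)
  have he : ∀ (x : Fin (2 * n) → ℝ) (i : Fin n) (j : Fin 2),
      e x i j = x (e₁.symm (i, j)) := fun _ _ _ => rfl
  have he' : ∀ (y : Fin n → E) (k : Fin (2 * n)),
      e.symm y k = y (e₁ k).1 (e₁ k).2 := fun _ _ => rfl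
  have ce : Continuous ⇑e := by
    apply continuous_pi; intro i; apply continuous_pi; intro j
    simp only [he]
    exact continuous_apply _
  have ce' : Continuous ⇑e.symm := by
    apply continuous_pi; intro k
    simp only [he']
    exact (continuous_apply _).comp (continuous_apply _)
  -- the product action
  let rhoPi : (Fin n → FreeGroup (Fin 2)) →* Equiv.Perm (Fin n → E) :=
    { toFun := fun γ => Equiv.piCongrRight fun i => rho1 (γ i)
      map_one' := Equiv.ext fun x => funext fun i => by
        show rho1 ((1 : Fin n → FreeGroup (Fin 2)) i) (x i) = x i
        rw [show ((1 : Fin n → FreeGroup (Fin 2)) i) = 1 from rfl, _root_.map_one]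
        rfl
      map_mul' := fun γ δ => Equiv.ext fun x => funext fun i => by
        show rho1 ((γ * δ) i) (x i) = rho1 (γ i) (rho1 (δ i) (x i))
        rw [show (γ * δ) i = γ i * δ i from rfl, _root_.map_mul]
        rfl }
  have hrhoPi : ∀ γ (y : Fin n → E) (i : Fin n), rhoPi γ y i = rho1 (γ i) (y i) :=
    fun _ _ _ => rfl
  -- conjugate to an action on `Fin (2*n) → ℝ`
  refine ⟨{
      toFun := fun γ => Equiv.permCongr e.symm (rhoPi γ)
      map_one' := by ext x; simp
      map_mul' := by intro γ δ; ext x; simp }, ?_, ?_⟩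
  · intro γ
    show Continuous fun x => (Equiv.permCongr e.symm (rhoPi γ)) x
    have : ∀ x, (Equiv.permCongr e.symm (rhoPi γ)) x = e.symm (rhoPi γ (e x)) := by
      intro x; simp [Equiv.permCongr_apply]
    simp only [this]
    apply ce'.comp
    have : Continuous fun x : Fin (2*n) → ℝ => rhoPi γ (e x) := by
      apply continuous_pi
      intro i
      simp only [hrhoPi]
      exact (continuous_rho1 (γ i)).comp ((continuous_apply i).comp ce)
    exact this
  · intro K hK
    -- project the compact set to each plane factor
    have hKi : ∀ i : Fin n, IsCompact ((fun x => e x i) '' K) := by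
      intro i
      exact hK.image ((continuous_apply i).comp ce)
    have hsub : {γ : Fin n → FreeGroup (Fin 2) |
        ∃ x ∈ K, (Equiv.permCongr e.symm (rhoPi γ)) x ∈ K} ⊆
        Set.pi Set.univ fun i =>
          {δ : FreeGroup (Fin 2) | ∃ q ∈ (fun x => e x i) '' K, rho1 δ q ∈ (fun x => e x i) '' K} := by
      rintro γ ⟨x, hx, hgx⟩ i _
      refine ⟨e x i, ⟨x, hx, rfl⟩, ?_⟩
      have hcalc : rho1 (γ i) (e x i)
          = e ((Equiv.permCongr e.symm (rhoPi γ)) x) i := by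
        have h1 : (Equiv.permCongr e.symm (rhoPi γ)) x = e.symm (rhoPi γ (e x)) := by
          simp [Equiv.permCongr_apply]
        rw [h1, Equiv.apply_symm_apply]
        exact (hrhoPi γ (e x) i).symm
      rw [hcalc]
      exact ⟨_, hgx, rfl⟩
    exact Set.Finite.subset (Set.Finite.pi fun i => core_finite (hKi i)) hsub
end
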